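/- arXiv:1612.05389 — 7 statements merged into one kernel-verified Lean document; each statement's English description precedes it below -/
import Mathlib

section
/- For any q ∈ (0,1) and any ω > 0, the inequality ω·cos(qπ/2) + sin(qπ/2) ≥ ω^(1-q) holds. -/
open Real

theorem stmt_0 (q ω : ℝ) (hq0 : 0 < q) (hq1 : q < 1) (hω : 0 < ω) :
    ω * Real.cos (q * π / 2) + Real.sin (q * π / 2) ≥ ω ^ (1 - q) := by
  have hπ := Real.pi_pos
  have hx0 : 0 ≤ q * π / 2 := by positivity
  have hx1 : q * π / 2 ≤ π / 2 := by nlinarith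
  have hsin : q ≤ Real.sin (q * π / 2) := by
    have := Real.mul_le_sin hx0 hx1
    have h : 2 / π * (q * π / 2) = q := by field_simp
    linarith [h ▸ this]
  have hcos : 1 - q ≤ Real.cos (q * π / 2) := by
    have := Real.one_sub_mul_le_cos hx0 hx1
    have h : 2 / π * (q * π / 2) = q := by field_simp
    linarith [h ▸ this]
  have hyoung : ω ^ (1 - q) ≤ (1 - q) * ω + q * 1 := by
    have := Real.geom_mean_le_arith_mean2_weighted (by linarith : (0:ℝ) ≤ 1 - q)
      hq0.le hω.le zero_le_one (by ring)
    simpa using this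
  nlinarith [Real.sin_nonneg_of_nonneg_of_le_pi hx0 (by linarith)]
end

section
/- For any θ ∈ (0, π/2) and q ∈ (0,1), sin(θ + qπ/2) ≥ (sin θ)^(1-q) · (cos θ)^q. -/
open Real

theorem stmt_1 (θ q : ℝ) (hθ0 : 0 < θ) (hθ1 : θ < π / 2) (hq0 : 0 < q) (hq1 : q < 1) :
    Real.sin (θ + q * π / 2) ≥ (Real.sin θ) ^ (1 - q) * (Real.cos θ) ^ q := by
  have hπ : (0:ℝ) < π := Real.pi_pos
  have hs : 0 ≤ Real.sin θ := Real.sin_nonneg_of_nonneg_of_le_pi hθ0.le (by linarith)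
  have hc : 0 ≤ Real.cos θ := Real.cos_nonneg_of_mem_Icc ⟨by linarith, hθ1.le⟩
  have hgm : (Real.sin θ) ^ (1 - q) * (Real.cos θ) ^ q ≤
      (1 - q) * Real.sin θ + q * Real.cos θ :=
    Real.geom_mean_le_arith_mean2_weighted (by linarith) hq0.le hs hc (by ring)
  have h1 : q ≤ Real.sin (q * π / 2) := by
    have := Real.mul_le_sin (x := q * π / 2) (by positivity)
      (by nlinarith)
    calc q = 2 / π * (q * π / 2) := by field_simp
    _ ≤ _ := this
  have h2 : 1 - q ≤ Real.cos (q * π / 2) := by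
    rw [← Real.sin_pi_div_two_sub]
    have := Real.mul_le_sin (x := π / 2 - q * π / 2) (by nlinarith) (by nlinarith)
    calc 1 - q = 2 / π * (π / 2 - q * π / 2) := by field_simp
    _ ≤ _ := this
  rw [Real.sin_add]
  have := mul_le_mul_of_nonneg_left h1 hc
  have := mul_le_mul_of_nonneg_left h2 hs
  nlinarith
end

section
/- Let q ∈ (0,1), a ≥ 0, b > 0, c > 0, and let s be a complex number with Re(s) ≥ 0 and s ≠ -b. If s^(q+1) + a·s + b·s^q + c = 0 (principal branch of the complex power), then Re(s^q) ≤ 0. -/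
theorem stmt_7 (q a b c : ℝ) (hq0 : 0 < q) (hq1 : q < 1) (ha : 0 ≤ a) (hb : 0 < b)
    (hc : 0 < c) (s : ℂ) (hs : 0 ≤ s.re) (hsb : s ≠ -(b : ℂ))
    (hroot : s ^ ((q : ℂ) + 1) + (a : ℂ) * s + (b : ℂ) * s ^ (q : ℂ) + (c : ℂ) = 0) :
    (s ^ (q : ℂ)).re ≤ 0 := by
  have hs0 : s ≠ 0 := by
    intro h
    subst h
    have hq : (q : ℂ) ≠ 0 := by exact_mod_cast hq0.ne'
    have hq' : (q : ℂ) + 1 ≠ 0 := by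
      intro h
      have := congrArg Complex.re h
      simp at this
      linarith
    rw [Complex.zero_cpow hq, Complex.zero_cpow hq'] at hroot
    simp at hroot
    exact hc.ne' (by exact_mod_cast hroot)
  have h1 : s ^ ((q : ℂ) + 1) = s ^ (q : ℂ) * s := by
    rw [Complex.cpow_add _ _ hs0, Complex.cpow_one]
  have hz : s + (b : ℂ) ≠ 0 := by
    intro h
    apply hsb
    linear_combination h
  have h2 : s ^ (q : ℂ) * (s + (b : ℂ)) = -((a : ℂ) * s + (c : ℂ)) := by
    rw [h1] at hroot
    ring_nf
    ring_nf at hroot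
    linear_combination hroot
  have key : s ^ (q : ℂ) * ((Complex.normSq (s + (b : ℂ)) : ℝ) : ℂ)
      = -((a : ℂ) * s + (c : ℂ)) * (starRingEnd ℂ) (s + (b : ℂ)) := by
    rw [← Complex.mul_conj]
    rw [← mul_assoc, h2]
  have hre := congrArg Complex.re key
  have hn : 0 < Complex.normSq (s + (b : ℂ)) := Complex.normSq_pos.mpr hz
  simp [Complex.mul_re, Complex.mul_im, Complex.add_re, Complex.add_im,
    Complex.ofReal_re, Complex.ofReal_im, Complex.conj_re, Complex.conj_im,
    Complex.neg_re, Complex.neg_im] at hre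
  nlinarith [sq_nonneg s.im, hre, hn, mul_nonneg ha hs,
    mul_nonneg (mul_nonneg ha hs) hs, mul_nonneg (add_nonneg hc.le (mul_nonneg ha hs)) (add_nonneg hs hb.le)]
end

section
/- Let q ∈ (0,1), a, b, c ∈ ℝ with a ≥ 0, b > 0, c > 0. Then the equation s^(q+1) + a·s + b·s^q + c = 0 (principal branch) has no complex root s with Re(s) ≥ 0. -/
theorem stmt_9 (q a b c : ℝ) (hq0 : 0 < q) (hq1 : q < 1) (ha : 0 ≤ a) (hb : 0 < b)
    (hc : 0 < c) (s : ℂ) (hs : 0 ≤ s.re) :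
    s ^ ((q : ℂ) + 1) + (a : ℂ) * s + (b : ℂ) * s ^ (q : ℂ) + (c : ℂ) ≠ 0 := by
  intro h
  by_cases hs0 : s = 0
  · subst hs0
    rw [Complex.zero_cpow (by
        intro hz
        have : (q : ℂ) = -1 := by linear_combination hz
        have : q = -1 := by exact_mod_cast congrArg Complex.re this
        linarith),
      Complex.zero_cpow (by exact_mod_cast hq0.ne')] at h
    simp at h
    exact_mod_cast absurd h (by exact_mod_cast hc.ne')
  · have hsb : s + (b : ℂ) ≠ 0 := by
      intro hz
      have := congrArg Complex.re hz
      simp at this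
      linarith
    have hqp : s ^ ((q : ℂ) + 1) = s ^ (q : ℂ) * s := by
      rw [Complex.cpow_add _ _ hs0, Complex.cpow_one]
    rw [hqp] at h
    have h1 : s ^ (q : ℂ) = (-((a : ℂ) * s + c)) / (s + b) := by
      rw [eq_div_iff hsb]; linear_combination h
    -- real part of s ^ q is positive
    have harg : |s.arg| ≤ Real.pi / 2 := Complex.abs_arg_le_pi_div_two_iff.mpr hs
    have hrepos : 0 < (s ^ (q : ℂ)).re := by
      rw [Complex.cpow_def_of_ne_zero hs0, Complex.exp_re]
      apply mul_pos (Real.exp_pos _)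
      apply Real.cos_pos_of_mem_Ioo
      have him : (Complex.log s * q).im = s.arg * q := by
        simp [Complex.log_im]
      rw [him]
      constructor
      · nlinarith [abs_le.mp harg, Real.pi_pos]
      · nlinarith [abs_le.mp harg, Real.pi_pos]
    -- real part is nonpositive
    have hreneg : (s ^ (q : ℂ)).re < 0 := by
      rw [h1, Complex.div_re]
      have hN : 0 < Complex.normSq (s + b) := by
        rw [Complex.normSq_pos]; exact hsb
      have h2 : (-((a : ℂ) * s + c)).re = -(a * s.re + c) := by simp
      have h3 : (-((a : ℂ) * s + c)).im = -(a * s.im) := by simp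
      have h4 : (s + (b : ℂ)).re = s.re + b := by simp
      have h5 : (s + (b : ℂ)).im = s.im := by simp
      rw [h2, h3, h4, h5]
      rw [← add_div, div_neg_iff]
      right
      constructor
      · nlinarith [sq_nonneg s.im, sq_nonneg s.re, mul_nonneg ha hs]
      · exact hN
    linarith
end

section
/- Let q ∈ (0,1), b > 0, c > 0, ω > 0. The complex number s = i·b·ω is a root of Δ(s) = s^(q+1) + a·s + b·s^q + c (principal branch) for some a ∈ ℝ if and only if ω > cot(qπ/2), c = b^(q+1)·ω^q·(ω·sin(qπ/2) − cos(qπ/2)), and a = −b^q·ω^(q−1)·(ω·cos(qπ/2) + sin(qπ/2)). -/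
open Real

lemma key (r t : ℝ) (hr : 0 < r) :
    (Complex.I * r) ^ (t : ℂ)
      = ((r ^ t * Real.cos (t * π / 2) : ℝ) : ℂ)
        + ((r ^ t * Real.sin (t * π / 2) : ℝ) : ℂ) * Complex.I := by
  have hs : (Complex.I * r) ≠ 0 := by
    simp [Complex.I_ne_zero, Complex.ofReal_ne_zero, hr.ne']
  rw [Complex.cpow_def_of_ne_zero hs]
  have hlog : Complex.log (Complex.I * r) = (Real.log r : ℂ) + (π / 2 : ℝ) * Complex.I := by
    rw [Complex.log]
    rw [mul_comm Complex.I (r : ℂ)]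
    rw [Complex.arg_real_mul _ hr, Complex.arg_I]
    simp [Complex.norm_def, Complex.normSq_mul, abs_of_pos hr,
      Real.sqrt_mul_self hr.le]
  rw [hlog]
  have : ((Real.log r : ℂ) + (π / 2 : ℝ) * Complex.I) * t
      = ((Real.log r * t : ℝ) : ℂ) + ((t * π / 2 : ℝ) : ℂ) * Complex.I := by
    push_cast; ring
  rw [this, Complex.exp_add, Complex.exp_mul_I]
  rw [← Complex.ofReal_exp, ← Real.rpow_def_of_pos hr,
    ← Complex.ofReal_cos, ← Complex.ofReal_sin]
  push_cast
  ring

theorem stmt_10 (q b c ω : ℝ) (hq0 : 0 < q) (hq1 : q < 1) (hb : 0 < b) (hc : 0 < c)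
    (hω : 0 < ω) (a : ℝ) :
    ((Complex.I * b * ω) ^ ((q : ℂ) + 1) + (a : ℂ) * (Complex.I * b * ω)
      + (b : ℂ) * (Complex.I * b * ω) ^ (q : ℂ) + (c : ℂ) = 0)
    ↔ (ω > Real.cot (q * π / 2)
        ∧ c = b ^ (q + 1) * ω ^ q * (ω * Real.sin (q * π / 2) - Real.cos (q * π / 2))
        ∧ a = -b ^ q * ω ^ (q - 1) * (ω * Real.cos (q * π / 2) + Real.sin (q * π / 2))) := by
  have hπ := Real.pi_pos
  have hr : (0:ℝ) < b * ω := mul_pos hb hω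
  have e1 : (Complex.I * b * ω : ℂ) = Complex.I * ((b * ω : ℝ) : ℂ) := by push_cast; ring
  have e2 : ((q:ℂ) + 1) = ((q + 1 : ℝ) : ℂ) := by push_cast; ring
  rw [e1, e2, key _ _ hr, key _ _ hr]
  have hcos1 : Real.cos ((q+1) * π / 2) = -Real.sin (q * π / 2) := by
    have h : (q+1) * π / 2 = q * π / 2 + π / 2 := by ring
    rw [h, Real.cos_add_pi_div_two]
  have hsin1 : Real.sin ((q+1) * π / 2) = Real.cos (q * π / 2) := by
    have h : (q+1) * π / 2 = q * π / 2 + π / 2 := by ring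
    rw [h, Real.sin_add_pi_div_two]
  rw [hcos1, hsin1, Complex.ext_iff, Real.cot_eq_cos_div_sin]
  simp only [Complex.add_re, Complex.add_im, Complex.mul_re, Complex.mul_im,
    Complex.ofReal_re, Complex.ofReal_im, Complex.I_re, Complex.I_im,
    Complex.zero_re, Complex.zero_im]
  have hS : 0 < Real.sin (q * π / 2) := by
    apply Real.sin_pos_of_pos_of_lt_pi <;> nlinarith
  set S := Real.sin (q * π / 2) with hSdef
  set C := Real.cos (q * π / 2) with hCdef
  have hA : (b*ω)^q = b^q * ω^q := Real.mul_rpow hb.le hω.le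
  have hB : (b*ω)^(q+1) = (b*b^q) * (ω*ω^q) := by
    rw [Real.mul_rpow hb.le hω.le, Real.rpow_add hb, Real.rpow_add hω,
      Real.rpow_one, Real.rpow_one]; ring
  have hC : b^(q+1) = b*b^q := by rw [Real.rpow_add hb, Real.rpow_one]; ring
  have hE : ω^(q-1) = ω^q/ω := by
    rw [Real.rpow_sub hω, Real.rpow_one]
  have hX : 0 < b^q := Real.rpow_pos_of_pos hb q
  have hY : 0 < ω^q := Real.rpow_pos_of_pos hω q
  rw [hA, hB, hC, hE]
  constructor
  · rintro ⟨h1, h2⟩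
    have hceq : c = b * b^q * ω^q * (ω * S - C) := by linear_combination h1
    refine ⟨?_, by linear_combination hceq, ?_⟩
    · rw [gt_iff_lt, div_lt_iff₀ hS]
      nlinarith [mul_pos (mul_pos hb hX) hY]
    · have ha : ω * a = -(b^q * ω * ω^q * C) - b^q * ω^q * S := by
        apply mul_left_cancel₀ hb.ne'
        linear_combination h2
      apply mul_left_cancel₀ hω.ne'
      rw [ha]
      field_simp
      ring
  · rintro ⟨h0, h2, h3⟩
    constructor
    · linear_combination h2
    · rw [h3]
      field_simp
      ring
end

section
/- Let q ∈ (0,1), b > 0, c > 0, and define a*(b,c,q) = −b^q·(h_q⁻¹(c/b^(q+1)))^(q−1)·(h_q⁻¹(c/b^(q+1))·cos(qπ/2) + sin(qπ/2)), where h_q⁻¹ is the inverse of h_q(ω) = ω^q(ω sin(qπ/2) − cos(qπ/2)) on (cot(qπ/2), ∞). Then a*(b,c,q) ≤ −b^q. -/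
open Real

theorem stmt_11 (q b c ω : ℝ) (hq0 : 0 < q) (hq1 : q < 1) (hb : 0 < b) (hc : 0 < c)
    (hω : ω > Real.cot (q * π / 2))
    (hinv : ω ^ q * (ω * Real.sin (q * π / 2) - Real.cos (q * π / 2)) = c / b ^ (q + 1)) :
    -b ^ q * ω ^ (q - 1) * (ω * Real.cos (q * π / 2) + Real.sin (q * π / 2)) ≤ -b ^ q := by
  set θ := q * π / 2 with hθ
  have hπ := Real.pi_pos
  have hθ0 : 0 < θ := by positivity
  have hθ2 : θ < π / 2 := by rw [hθ]; nlinarith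
  have hsin : 0 < Real.sin θ := Real.sin_pos_of_pos_of_lt_pi hθ0 (by linarith)
  have hcos : 0 < Real.cos θ := Real.cos_pos_of_mem_Ioo ⟨by linarith, hθ2⟩
  have hcot : 0 < Real.cot θ := by
    rw [Real.cot_eq_cos_div_sin]; positivity
  have hω0 : 0 < ω := lt_trans hcot hω
  -- Jordan bounds: sin θ ≥ q, cos θ ≥ 1 - q
  have hsq : q ≤ Real.sin θ := by
    have := Real.mul_le_sin hθ0.le hθ2.le
    rw [hθ] at this ⊢
    calc q = 2 / π * (q * π / 2) := by field_simp
    _ ≤ _ := this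
  have hcq : 1 - q ≤ Real.cos θ := by
    have := Real.one_sub_mul_le_cos hθ0.le hθ2.le
    rw [hθ] at this ⊢
    calc 1 - q = 1 - 2 / π * (q * π / 2) := by field_simp
    _ ≤ _ := this
  -- weighted AM-GM
  have h1q : (0:ℝ) < 1 - q := by linarith
  have key : ω ^ (1 - q) ≤ ω * Real.cos θ + Real.sin θ := by
    have hgm := Real.geom_mean_le_arith_mean2_weighted h1q.le hq0.le
      (p₁ := ω * Real.cos θ / (1 - q)) (p₂ := Real.sin θ / q)
      (by positivity) (by positivity) (by ring)
    have harith : (1 - q) * (ω * Real.cos θ / (1 - q)) + q * (Real.sin θ / q)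
        = ω * Real.cos θ + Real.sin θ := by field_simp
    rw [harith] at hgm
    refine le_trans ?_ hgm
    have h1 : ω ^ (1 - q) ≤ (ω * Real.cos θ / (1 - q)) ^ (1 - q) := by
      apply Real.rpow_le_rpow hω0.le _ h1q.le
      rw [le_div_iff₀ h1q]
      nlinarith
    have h2 : (1:ℝ) ≤ (Real.sin θ / q) ^ q := by
      apply Real.one_le_rpow _ hq0.le
      rw [le_div_iff₀ hq0]; linarith
    calc ω ^ (1 - q) = ω ^ (1 - q) * 1 := by ring
    _ ≤ (ω * Real.cos θ / (1 - q)) ^ (1 - q) * (Real.sin θ / q) ^ q :=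
        mul_le_mul h1 h2 zero_le_one (Real.rpow_nonneg (by positivity) _)
  have hmain : 1 ≤ ω ^ (q - 1) * (ω * Real.cos θ + Real.sin θ) := by
    have hpow : ω ^ (q - 1) * ω ^ (1 - q) = 1 := by
      rw [← Real.rpow_add hω0]; norm_num
    calc (1:ℝ) = ω ^ (q - 1) * ω ^ (1 - q) := hpow.symm
    _ ≤ _ := by
        apply mul_le_mul_of_nonneg_left key (Real.rpow_nonneg hω0.le _)
  have hbq : 0 < b ^ q := Real.rpow_pos_of_pos hb q
  nlinarith [hmain, hbq]
end

section
/- Let q ∈ (0,1) and a, b, c ∈ ℝ with b > 0, c > 1, 0 < a + b + c + 1 < (√c − 1)², then Δ(s) = s^(q+1) + a·s + b·s^q + c has at least one positive real root. -/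
theorem stmt_13 (q a b c : ℝ) (hq0 : 0 < q) (hq1 : q < 1) (hb : 0 < b) (hc : 1 < c)
    (h1 : 0 < a + b + c + 1) (h2 : a + b + c + 1 < (Real.sqrt c - 1) ^ 2) :
    ∃ s : ℝ, 0 < s ∧ s ^ (q + 1) + a * s + b * s ^ q + c = 0 := by
  set f : ℝ → ℝ := fun s => s ^ (q + 1) + a * s + b * s ^ q + c with hf
  have hc0 : (0:ℝ) < c := lt_trans one_pos hc
  have hsqrt : 1 < Real.sqrt c := by
    nlinarith [Real.sqrt_nonneg c, Real.sq_sqrt hc0.le]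
  have hsq : Real.sqrt c ^ 2 = c := Real.sq_sqrt hc0.le
  -- a + b < -2 √c
  have hab : a + b < -2 * Real.sqrt c := by nlinarith
  set s0 : ℝ := -(a + b) / 2 with hs0
  have hs0sqrt : Real.sqrt c < s0 := by rw [hs0]; nlinarith
  have hs01 : (1:ℝ) < s0 := lt_trans hsqrt hs0sqrt
  -- continuity of f
  have hcont : Continuous f := by
    have h1c : Continuous fun s : ℝ => s ^ (q + 1) := by
      apply Real.continuous_rpow_const; linarith
    have h2c : Continuous fun s : ℝ => s ^ q := by
      apply Real.continuous_rpow_const; linarith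
    continuity
  -- f 1 > 0
  have hf1 : 0 < f 1 := by
    simp only [hf, Real.one_rpow, mul_one]
    linarith
  -- f s0 < 0
  have hfs0 : f s0 < 0 := by
    have h1le : (1:ℝ) ≤ s0 := hs01.le
    have hA : s0 ^ (q + 1) ≤ s0 ^ (2:ℝ) :=
      Real.rpow_le_rpow_of_exponent_le h1le (by linarith)
    have hB : s0 ^ q ≤ s0 ^ (1:ℝ) :=
      Real.rpow_le_rpow_of_exponent_le h1le (by linarith)
    rw [Real.rpow_two] at hA
    rw [Real.rpow_one] at hB
    have hquad : s0 ^ 2 + a * s0 + b * s0 + c < 0 := by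
      have : s0 = -(a+b)/2 := rfl
      nlinarith [hs0sqrt, Real.sqrt_nonneg c]
    have : f s0 ≤ s0 ^ 2 + a * s0 + b * s0 + c := by
      simp only [hf]
      nlinarith
    linarith
  obtain ⟨s, hs, hfs⟩ := intermediate_value_Icc' hs01.le hcont.continuousOn
    (Set.mem_Icc.mpr ⟨hfs0.le, hf1.le⟩)
  exact ⟨s, lt_of_lt_of_le one_pos hs.1, hfs⟩
end
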